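/- arXiv:1606.05113 — 12 statements merged into one kernel-verified Lean document; each statement's English description precedes it below -/
import Mathlib

section
/- Let J be convex and absolutely one-homogeneous on a Banach space X, v ∈ X, and p ∈ ∂J(v). Define ICB_J^p(u,v) = inf over decompositions u = φ + ψ of D_J^p(φ,v) + D_J^{-p}(ψ,-v). Then the set M^IC = {u ∈ X | ICB_J^p(u,v) = 0} is a nonempty linear subspace of X. -/
/-- For convex, absolutely one-homogeneous `J` and `p ∈ ∂J(v)`,
with `ICB_J^p(u,v) = inf_{φ+ψ=u} D_J^p(φ,v) + D_J^{-p}(ψ,-v)`, the set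
`M^IC = {u | ICB_J^p(u,v) = 0}` is a nonempty linear subspace: it contains `0`,
is closed under addition, and closed under scalar multiplication. -/
theorem icb_zero_set_linear_subspace
    {X : Type*} [NormedAddCommGroup X] [NormedSpace ℝ X]
    (J : X → ℝ) (hJconv : ConvexOn ℝ Set.univ J)
    (hJhom : ∀ (c : ℝ) (u : X), J (c • u) = |c| * J u)
    (v : X) (p : X →L[ℝ] ℝ)
    (hp : ∀ u : X, J v + p (u - v) ≤ J u)
    (ICB : X → ℝ)
    (hICB : ∀ u : X, ICB u = sInf {r : ℝ | ∃ φ ψ : X, φ + ψ = u ∧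
      r = (J φ - J v - p (φ - v)) + (J ψ - J (-v) + p (ψ + v))}) :
    ICB 0 = 0 ∧
    (∀ u₁ u₂ : X, ICB u₁ = 0 → ICB u₂ = 0 → ICB (u₁ + u₂) = 0) ∧
    (∀ (c : ℝ) (u : X), ICB u = 0 → ICB (c • u) = 0) := by
  -- Basic facts about J and p
  have hJ0 : J 0 = 0 := by
    have := hJhom 0 0
    simpa using this
  have hJneg : ∀ u : X, J (-u) = J u := by
    intro u
    have := hJhom (-1) u
    simpa using this
  have hpv : p v = J v := by
    have h1 : J v ≤ p v := by
      have := hp 0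
      simp only [zero_sub, map_neg, hJ0] at this
      linarith
    have h2 : p v ≤ J v := by
      have := hp ((2:ℝ) • v)
      have h2v : J ((2:ℝ) • v) = 2 * J v := by
        have := hJhom 2 v; simpa using this
      have hpe : p ((2:ℝ) • v - v) = p v := by
        have : (2:ℝ) • v - v = v := by
          rw [two_smul]; abel
        rw [this]
      rw [h2v, hpe] at this
      linarith
    linarith
  have hple : ∀ u : X, p u ≤ J u := by
    intro u
    have := hp u
    rw [map_sub, hpv] at this
    linarith
  have hsub : ∀ a b : X, J (a + b) ≤ J a + J b := by
    intro a b
    have h := hJconv.2 (Set.mem_univ a) (Set.mem_univ b)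
      (by norm_num : (0:ℝ) ≤ 1/2) (by norm_num : (0:ℝ) ≤ 1/2) (by norm_num)
    have heq : (1/2 : ℝ) • a + (1/2 : ℝ) • b = (1/2 : ℝ) • (a + b) := by
      rw [smul_add]
    rw [heq, hJhom] at h
    simp only [smul_eq_mul] at h
    rw [abs_of_pos (by norm_num : (0:ℝ) < 1/2)] at h
    linarith
  -- simplify the defining expression
  have hr : ∀ φ ψ : X,
      (J φ - J v - p (φ - v)) + (J ψ - J (-v) + p (ψ + v))
        = (J φ - p φ) + (J ψ + p ψ) := by
    intro φ ψ
    rw [map_sub, map_add, hpv, hJneg]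
    ring
  set S : X → Set ℝ := fun u => {r : ℝ | ∃ φ ψ : X, φ + ψ = u ∧
      r = (J φ - J v - p (φ - v)) + (J ψ - J (-v) + p (ψ + v))} with hS
  have hmem : ∀ u φ ψ : X, φ + ψ = u → (J φ - p φ) + (J ψ + p ψ) ∈ S u := by
    intro u φ ψ h
    exact ⟨φ, ψ, h, (hr φ ψ).symm⟩
  have hne : ∀ u : X, (S u).Nonempty := by
    intro u
    exact ⟨(J u - p u) + (J 0 + p 0), hmem u u 0 (by abel)⟩
  have hlb : ∀ u : X, ∀ r ∈ S u, (0:ℝ) ≤ r := by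
    rintro u r ⟨φ, ψ, -, rfl⟩
    rw [hr]
    have h1 : 0 ≤ J φ - p φ := by have := hple φ; linarith
    have h2 : 0 ≤ J ψ + p ψ := by
      have := hple (-ψ)
      rw [hJneg, map_neg] at this
      linarith
    linarith
  have hbdd : ∀ u : X, BddBelow (S u) := fun u => ⟨0, hlb u⟩
  have hnonneg : ∀ u : X, 0 ≤ ICB u := by
    intro u
    rw [hICB u]
    exact le_csInf (hne u) (hlb u)
  -- zero iff approximations
  have hzero : ∀ u : X,
      (∀ ε : ℝ, 0 < ε → ∃ φ ψ : X, φ + ψ = u ∧ (J φ - p φ) + (J ψ + p ψ) < ε) →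
      ICB u = 0 := by
    intro u h
    refine le_antisymm ?_ (hnonneg u)
    rw [hICB u]
    refine le_of_forall_pos_lt_add ?_
    intro ε hε
    obtain ⟨φ, ψ, hsum, hlt⟩ := h ε hε
    calc sInf (S u) ≤ (J φ - p φ) + (J ψ + p ψ) :=
          csInf_le (hbdd u) (hmem u φ ψ hsum)
      _ < ε := hlt
      _ = 0 + ε := by ring
  have hextract : ∀ u : X, ICB u = 0 →
      ∀ ε : ℝ, 0 < ε → ∃ φ ψ : X, φ + ψ = u ∧ (J φ - p φ) + (J ψ + p ψ) < ε := by
    intro u hu ε hε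
    have h0 : sInf (S u) = 0 := by rw [← hICB u]; exact hu
    obtain ⟨a, ha, halt⟩ := Real.lt_sInf_add_pos (hne u) hε
    obtain ⟨φ, ψ, hsum, hra⟩ := ha
    refine ⟨φ, ψ, hsum, ?_⟩
    rw [← hr φ ψ, ← hra]
    rw [h0, zero_add] at halt
    exact halt
  refine ⟨?_, ?_, ?_⟩
  · -- ICB 0 = 0
    apply hzero
    intro ε hε
    refine ⟨0, 0, by abel, ?_⟩
    simp [hJ0, hε]
  · -- addition
    intro u₁ u₂ h1 h2
    apply hzero
    intro ε hε
    obtain ⟨φ₁, ψ₁, hs1, hl1⟩ := hextract u₁ h1 (ε/2) (by linarith)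
    obtain ⟨φ₂, ψ₂, hs2, hl2⟩ := hextract u₂ h2 (ε/2) (by linarith)
    refine ⟨φ₁ + φ₂, ψ₁ + ψ₂, by rw [← hs1, ← hs2]; abel, ?_⟩
    have hφ : J (φ₁ + φ₂) ≤ J φ₁ + J φ₂ := hsub φ₁ φ₂
    have hψ : J (ψ₁ + ψ₂) ≤ J ψ₁ + J ψ₂ := hsub ψ₁ ψ₂
    have hpφ : p (φ₁ + φ₂) = p φ₁ + p φ₂ := map_add p φ₁ φ₂
    have hpψ : p (ψ₁ + ψ₂) = p ψ₁ + p ψ₂ := map_add p ψ₁ ψ₂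
    rw [hpφ, hpψ]
    linarith
  · -- scalar multiplication
    intro c u hu
    rcases eq_or_ne c 0 with rfl | hc
    · apply hzero
      intro ε hε
      refine ⟨0, 0, by simp, ?_⟩
      simp [hJ0, hε]
    apply hzero
    intro ε hε
    have habs : 0 < |c| := abs_pos.mpr hc
    obtain ⟨φ, ψ, hsum, hlt⟩ := hextract u hu (ε / |c|) (by positivity)
    rcases le_or_gt 0 c with hc0 | hc0
    · refine ⟨c • φ, c • ψ, by rw [← hsum, smul_add], ?_⟩
      rw [hJhom, hJhom, map_smul, map_smul]
      simp only [smul_eq_mul, abs_of_nonneg hc0]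
      rw [abs_of_nonneg hc0] at hlt habs
      calc c * J φ - c * p φ + (c * J ψ + c * p ψ)
          = c * ((J φ - p φ) + (J ψ + p ψ)) := by ring
        _ < c * (ε / c) := mul_lt_mul_of_pos_left hlt habs
        _ = ε := by field_simp
    · -- c < 0 : swap the decomposition
      refine ⟨c • ψ, c • φ, by rw [← hsum, smul_add]; abel, ?_⟩
      rw [hJhom, hJhom, map_smul, map_smul]
      simp only [smul_eq_mul, abs_of_neg hc0]
      rw [abs_of_neg hc0] at hlt
      have hnc : 0 < -c := by linarith
      calc -c * J ψ - c * p ψ + (-c * J φ + c * p φ)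
          = (-c) * ((J φ - p φ) + (J ψ + p ψ)) := by ring
        _ < (-c) * (ε / (-c)) := mul_lt_mul_of_pos_left hlt hnc
        _ = ε := by field_simp
end

section
/- Let J be convex and absolutely one-homogeneous on a Banach space X, v ∈ X, p ∈ ∂J(v). If D_J^p(u,v) = 0, then ICB_J^p(u,v) = 0, i.e. M^B ⊆ M^IC. -/
/-- For convex, absolutely one-homogeneous `J` and `p ∈ ∂J(v)`,
if `D_J^p(u,v) = 0` then `ICB_J^p(u,v) = 0`, i.e. `M^B ⊆ M^IC`. -/
theorem bregman_zero_implies_icb_zero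
    {X : Type*} [NormedAddCommGroup X] [NormedSpace ℝ X]
    (J : X → ℝ) (hJconv : ConvexOn ℝ Set.univ J)
    (hJhom : ∀ (c : ℝ) (u : X), J (c • u) = |c| * J u)
    (v : X) (p : X →L[ℝ] ℝ)
    (hp : ∀ u : X, J v + p (u - v) ≤ J u)
    (u : X) (hu : J u - J v - p (u - v) = 0) :
    sInf {r : ℝ | ∃ φ ψ : X, φ + ψ = u ∧
      r = (J φ - J v - p (φ - v)) + (J ψ - J (-v) + p (ψ + v))} = 0 := by
  have hJ0 : J 0 = 0 := by
    have := hJhom 0 0; simpa using this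
  have hneg : ∀ w : X, J (-w) = J w := by
    intro w
    have := hJhom (-1) w; simpa using this
  have hJv : J v = p v := by
    have h1 : J v ≤ p v := by
      have := hp 0
      simp only [zero_sub, hJ0] at this
      have hpv : p (-v) = - p v := by simp
      linarith [this, hpv ▸ this]
    have h2 : p v ≤ J v := by
      have := hp (2 • v)
      have h2v : J ((2:ℝ) • v) = 2 * J v := by
        rw [hJhom]; norm_num
      have hsmul : (2 : ℕ) • v = (2:ℝ) • v := by
        simp [two_smul, two_smul]
      rw [hsmul, h2v] at this
      have : J v + p ((2:ℝ) • v - v) ≤ 2 * J v := this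
      have hpp : p ((2:ℝ) • v - v) = p v := by
        congr 1
        rw [two_smul]; abel
      linarith [hpp ▸ this]
    linarith
  -- each element of the set is ≥ 0
  have hlb : ∀ r ∈ {r : ℝ | ∃ φ ψ : X, φ + ψ = u ∧
      r = (J φ - J v - p (φ - v)) + (J ψ - J (-v) + p (ψ + v))}, (0:ℝ) ≤ r := by
    rintro r ⟨φ, ψ, -, rfl⟩
    have h1 : 0 ≤ J φ - J v - p (φ - v) := by
      have := hp φ; linarith
    have h2 : 0 ≤ J ψ - J (-v) + p (ψ + v) := by
      have := hp (-ψ)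
      have hpψ : p (-ψ - v) = - p ψ - p v := by simp
      rw [hpψ, hneg ψ] at this
      rw [hneg v]
      have hpv : p (ψ + v) = p ψ + p v := by simp
      linarith [hpv]
    linarith
  -- 0 is in the set via φ = 2u, ψ = -u
  have hmem : (0:ℝ) ∈ {r : ℝ | ∃ φ ψ : X, φ + ψ = u ∧
      r = (J φ - J v - p (φ - v)) + (J ψ - J (-v) + p (ψ + v))} := by
    refine ⟨(2:ℝ) • u, -u, by rw [two_smul]; abel, ?_⟩
    have h2u : J ((2:ℝ) • u) = 2 * J u := by rw [hJhom]; norm_num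
    have hJu : J u = J v + p u - p v := by
      have hpu : p (u - v) = p u - p v := by simp
      rw [hpu] at hu; linarith
    have hp1 : p ((2:ℝ) • u - v) = 2 * p u - p v := by
      simp [two_smul]; ring
    have hp2 : p (-u + v) = - p u + p v := by simp
    rw [h2u, hneg u, hneg v, hp1, hp2, hJu, hJv]
    ring
  exact le_antisymm (csInf_le ⟨0, hlb⟩ hmem) (le_csInf ⟨0, hmem⟩ hlb)
end

section
/- Let f ∈ ℓ², α > 0, and define the soft-thresholding operator (S_α f)_i = f_i - α·sign(f_i) if |f_i| ≥ α, and 0 if |f_i| < α. Then S_α f is the unique minimizer over u ∈ ℓ¹ of (1/2)‖u - f‖²_{ℓ²} + α‖u‖_{ℓ¹}. -/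
/-- The soft-thresholding operator at level `α`. -/
noncomputable def softThresh (α : ℝ) (f : ℕ → ℝ) : ℕ → ℝ :=
  fun i => if α ≤ |f i| then f i - α * Real.sign (f i) else 0

lemma softThresh_key (α a t : ℝ) (hα : 0 < α) :
    (1/2) * ((if α ≤ |a| then a - α * Real.sign a else 0) - a)^2
      + α * |if α ≤ |a| then a - α * Real.sign a else 0|
      + (1/2) * (t - (if α ≤ |a| then a - α * Real.sign a else 0))^2
      ≤ (1/2) * (t - a)^2 + α * |t| := by
  rcases le_or_gt α |a| with h | h
  · rw [if_pos h]
    rcases lt_trichotomy a 0 with ha | ha | ha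
    · rw [Real.sign_of_neg ha]
      have hs : a + α ≤ 0 := by
        rw [abs_of_neg ha] at h; linarith
      rw [show a - α * (-1) = a + α by ring, abs_of_nonpos hs]
      rcases abs_cases t with ⟨h1, h2⟩ | ⟨h1, h2⟩ <;> nlinarith
    · simp [ha] at h; linarith
    · rw [Real.sign_of_pos ha]
      have hs : 0 ≤ a - α := by
        rw [abs_of_pos ha] at h; linarith
      rw [show a - α * 1 = a - α by ring, abs_of_nonneg hs]
      rcases abs_cases t with ⟨h1, h2⟩ | ⟨h1, h2⟩ <;> nlinarith
  · rw [if_neg (not_le.mpr h)]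
    rcases abs_cases t with ⟨h1, h2⟩ | ⟨h1, h2⟩ <;> rcases abs_cases a with ⟨h3, h4⟩ | ⟨h3, h4⟩ <;>
      simp only [abs_zero] <;> nlinarith

/-- For `f ∈ ℓ²` and `α > 0`, the soft-thresholding `S_α f` belongs
to `ℓ¹` and is the unique minimizer over `u ∈ ℓ¹` of
`(1/2)‖u - f‖²_{ℓ²} + α‖u‖_{ℓ¹}`. -/
theorem softThresh_unique_minimizer
    (f : ℕ → ℝ) (hf : Memℓp f 2) (α : ℝ) (hα : 0 < α) :
    Memℓp (softThresh α f) 1 ∧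
    (∀ u : ℕ → ℝ, Memℓp u 1 →
      (1/2) * (∑' i, (softThresh α f i - f i)^2) + α * (∑' i, |softThresh α f i|)
        ≤ (1/2) * (∑' i, (u i - f i)^2) + α * (∑' i, |u i|)) ∧
    (∀ u : ℕ → ℝ, Memℓp u 1 →
      (1/2) * (∑' i, (u i - f i)^2) + α * (∑' i, |u i|)
        = (1/2) * (∑' i, (softThresh α f i - f i)^2) + α * (∑' i, |softThresh α f i|) →
      u = softThresh α f) := by
  have hf2 : Summable (fun i => ‖f i‖ ^ (2 : ℝ)) := hf.summable (by norm_num)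
  -- finite support of softThresh
  have hev : ∀ᶠ i in Filter.cofinite, ‖f i‖ ^ (2:ℝ) < α ^ (2:ℝ) :=
    hf2.tendsto_cofinite_zero.eventually_lt_const (Real.rpow_pos_of_pos hα 2)
  have hfin : {i : ℕ | α ≤ |f i|}.Finite := by
    rw [Filter.eventually_cofinite] at hev
    refine hev.subset fun i hi => ?_
    simp only [Set.mem_setOf_eq, not_lt] at *
    exact Real.rpow_le_rpow hα.le (by simpa using hi) (by norm_num)
  have hszero : ∀ i ∉ hfin.toFinset, softThresh α f i = 0 := by
    intro i hi
    simp only [Set.Finite.mem_toFinset, Set.mem_setOf_eq] at hi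
    simp [softThresh, hi]
  -- summability facts
  have hs_abs : Summable (fun i => |softThresh α f i|) :=
    summable_of_ne_finset_zero (s := hfin.toFinset) fun i hi => by rw [hszero i hi, abs_zero]
  have hmem : Memℓp (softThresh α f) 1 := by
    apply memℓp_gen
    simp only [ENNReal.toReal_one, Real.rpow_one]
    exact hs_abs.congr fun i => (Real.norm_eq_abs _).symm
  have hsq : ∀ (u : ℕ → ℝ), Memℓp u 1 → Summable (fun i => (u i - f i)^2) := by
    intro u hu
    have h2 : Memℓp (u - f) 2 := (hu.of_exponent_ge (by norm_num)).sub hf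
    have := h2.summable (p := 2) (by norm_num)
    refine this.congr fun i => ?_
    rw [show ((2:ENNReal)).toReal = ((2:ℕ):ℝ) by norm_num, Real.rpow_natCast]
    simp [Real.norm_eq_abs, sq_abs]
  have hu_abs : ∀ (u : ℕ → ℝ), Memℓp u 1 → Summable (fun i => |u i|) := by
    intro u hu
    have := hu.summable (p := 1) (by norm_num)
    simpa [Real.norm_eq_abs] using this
  set s := softThresh α f with hs_def
  have hkey : ∀ (t : ℕ → ℝ) (i : ℕ),
      (1/2) * (s i - f i)^2 + α * |s i| + (1/2) * (t i - s i)^2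
        ≤ (1/2) * (t i - f i)^2 + α * |t i| := fun t i => softThresh_key α (f i) (t i) hα
  -- combined summable functions
  have hAs : Summable (fun i => (1/2) * (s i - f i)^2 + α * |s i|) :=
    ((hsq s hmem).mul_left _).add (hs_abs.mul_left _)
  have hAu : ∀ (u : ℕ → ℝ), Memℓp u 1 →
      Summable (fun i => (1/2) * (u i - f i)^2 + α * |u i|) := fun u hu =>
    ((hsq u hu).mul_left _).add ((hu_abs u hu).mul_left _)
  have htsum : ∀ (u : ℕ → ℝ), Memℓp u 1 →
      (∑' i, ((1/2) * (u i - f i)^2 + α * |u i|))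
        = (1/2) * (∑' i, (u i - f i)^2) + α * (∑' i, |u i|) := by
    intro u hu
    rw [Summable.tsum_add ((hsq u hu).mul_left _) ((hu_abs u hu).mul_left _), tsum_mul_left, tsum_mul_left]
  refine ⟨hmem, fun u hu => ?_, fun u hu heq => ?_⟩
  · rw [← htsum s hmem, ← htsum u hu]
    refine Summable.tsum_le_tsum (fun i => ?_) hAs (hAu u hu)
    have := hkey u i
    nlinarith [sq_nonneg (u i - s i)]
  · -- uniqueness
    have hsqd : Summable (fun i => (1/2) * (u i - s i)^2) := by
      have h2 : Memℓp (u - s) 2 :=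
        ((hu.of_exponent_ge (by norm_num)).sub (hmem.of_exponent_ge (by norm_num)))
      have := h2.summable (p := 2) (by norm_num)
      refine (this.congr fun i => ?_).mul_left _
      rw [show ((2:ENNReal)).toReal = ((2:ℕ):ℝ) by norm_num, Real.rpow_natCast]
      simp [Real.norm_eq_abs, sq_abs]
    have hle : (∑' i, ((1/2) * (s i - f i)^2 + α * |s i|)) + (∑' i, (1/2) * (u i - s i)^2)
        ≤ (∑' i, ((1/2) * (u i - f i)^2 + α * |u i|)) := by
      rw [← Summable.tsum_add hAs hsqd]
      exact Summable.tsum_le_tsum (fun i => hkey u i) (hAs.add hsqd) (hAu u hu)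
    rw [htsum u hu, htsum s hmem, heq] at hle
    have hz : (∑' i, (1/2) * (u i - s i)^2) ≤ 0 := by linarith
    have hz' : (∑' i, (1/2) * (u i - s i)^2) = 0 :=
      le_antisymm hz (tsum_nonneg fun i => by positivity)
    funext i
    have hi : (1/2) * (u i - s i)^2 ≤ 0 := hz' ▸ Summable.le_tsum hsqd i fun j _ => by positivity
    nlinarith [sq_nonneg (u i - s i)]
end

section
/- Let f ∈ ℓ², α > 0, u_α the soft-thresholding of f at level α, and p_α = (f - u_α)/α. Then p_α ∈ ∂‖·‖_{ℓ¹}(u_α), with (p_α)_i = sign(f_i) if |f_i| ≥ α and (p_α)_i = f_i/α if |f_i| < α. -/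
/-- For `f ∈ ℓ²`, `α > 0`, `u_α = S_α f` the soft-thresholding and
`p_α = (f - u_α)/α`, we have the componentwise formula
`(p_α)_i = sign(f_i)` if `|f_i| ≥ α`, `(p_α)_i = f_i/α` otherwise, and
`p_α ∈ ∂‖·‖_{ℓ¹}(u_α)`: `‖p_α‖_∞ ≤ 1` and `(p_α)_i = sign((u_α)_i)` on the
support of `u_α`. -/
theorem softThresh_subgradient
    (f : ℕ → ℝ) (hf : Memℓp f 2) (α : ℝ) (hα : 0 < α)
    (p : ℕ → ℝ) (hp : ∀ i, p i = (f i - softThresh α f i) / α) :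
    (∀ i, p i = if α ≤ |f i| then Real.sign (f i) else f i / α) ∧
    (∀ i, |p i| ≤ 1) ∧
    (∀ i, softThresh α f i ≠ 0 → p i = Real.sign (softThresh α f i)) := by
  have key : ∀ i, p i = if α ≤ |f i| then Real.sign (f i) else f i / α := by
    intro i
    rw [hp i, softThresh]
    by_cases h : α ≤ |f i|
    · simp only [h, if_true]
      field_simp
      ring
    · simp [h]
  refine ⟨key, ?_, ?_⟩
  · intro i
    rw [key i]
    by_cases h : α ≤ |f i|
    · simp only [h, if_true]
      rcases lt_trichotomy (f i) 0 with hf0 | hf0 | hf0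
      · rw [Real.sign_of_neg hf0]; norm_num
      · rw [hf0, Real.sign_zero]; norm_num
      · rw [Real.sign_of_pos hf0]; norm_num
    · simp only [h, if_false]
      push_neg at h
      rw [abs_div, abs_of_pos hα, div_le_one hα]
      exact h.le
  · intro i hne
    rw [key i]
    simp only [softThresh] at hne ⊢
    by_cases h : α ≤ |f i|
    · simp only [h, if_true] at hne ⊢
      rcases lt_trichotomy (f i) 0 with hf0 | hf0 | hf0
      · rw [Real.sign_of_neg hf0] at hne ⊢
        have hle : f i ≤ -α := by
          rwa [abs_of_neg hf0, le_neg] at h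
        have : f i - α * (-1) < 0 := by
          rcases lt_or_eq_of_le hle with h' | h'
          · linarith
          · exfalso; apply hne; rw [h']; ring
        rw [Real.sign_of_neg this]
      · exfalso
        rw [hf0, abs_zero] at h
        linarith
      · rw [Real.sign_of_pos hf0] at hne ⊢
        have hle : α ≤ f i := by rwa [abs_of_pos hf0] at h
        have : 0 < f i - α * 1 := by
          rcases lt_or_eq_of_le hle with h' | h'
          · linarith
          · exfalso; apply hne; rw [← h']; ring
        rw [Real.sign_of_pos this]
    · simp [h] at hne
end

section
/- Let f ∈ ℓ², α > 0, u_α the soft-thresholding of f, and p_α = (f - u_α)/α its ℓ¹-subgradient. Then for u ∈ ℓ¹, the Bregman distance D_{ℓ¹}^{p_α}(u, u_α) = ‖u‖_{ℓ¹} - ⟨p_α, u⟩ vanishes if and only if, for every index i, either (|f_i| ≥ α and u_i = λ sign(f_i) for some λ ≥ 0) or (|f_i| < α and u_i = 0). -/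
/-- For `f ∈ ℓ²`, `α > 0`, `u_α` the soft-thresholding of `f` and
`p_α = (f - u_α)/α` its `ℓ¹`-subgradient, the Bregman distance
`D_{ℓ¹}^{p_α}(u, u_α) = ‖u‖_{ℓ¹} - ⟨p_α, u⟩` vanishes for `u ∈ ℓ¹` if and only
if for every index `i` either (`|f_i| ≥ α` and `u_i = λ sign(f_i)` for some
`λ ≥ 0`) or (`|f_i| < α` and `u_i = 0`). -/
theorem softThresh_bregman_zero_iff
    (f : ℕ → ℝ) (hf : Memℓp f 2) (α : ℝ) (hα : 0 < α)
    (p : ℕ → ℝ) (hp : ∀ i, p i = (f i - softThresh α f i) / α)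
    (u : ℕ → ℝ) (hu : Memℓp u 1) :
    ((∑' i, |u i|) - (∑' i, p i * u i) = 0 ↔
      ∀ i, (α ≤ |f i| ∧ ∃ l : ℝ, 0 ≤ l ∧ u i = l * Real.sign (f i)) ∨
        (|f i| < α ∧ u i = 0)) := by
  -- explicit formula for p
  have hp' : ∀ i, (α ≤ |f i| → p i = Real.sign (f i)) ∧
      (¬ α ≤ |f i| → p i = f i / α) := by
    intro i
    constructor
    · intro h
      rw [hp i, softThresh, if_pos h]
      field_simp
      ring
    · intro h
      rw [hp i, softThresh, if_neg h]
      ring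
  have hpabs : ∀ i, |p i| ≤ 1 := by
    intro i
    by_cases h : α ≤ |f i|
    · rw [(hp' i).1 h]
      rcases lt_trichotomy (f i) 0 with h1 | h1 | h1
      · simp [Real.sign_of_neg h1]
      · simp [h1, Real.sign_zero]
      · simp [Real.sign_of_pos h1]
    · rw [(hp' i).2 h]
      rw [abs_div, abs_of_pos hα, div_le_one hα]
      exact (not_le.1 h).le
  -- summability
  have hsu : Summable (fun i => |u i|) := by
    have := (memℓp_gen_iff (by norm_num : (0:ℝ) < (1 : ENNReal).toReal)).1 hu
    simpa using this
  have hle : ∀ i, |p i * u i| ≤ |u i| := by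
    intro i
    rw [abs_mul]
    calc |p i| * |u i| ≤ 1 * |u i| := by
          exact mul_le_mul_of_nonneg_right (hpabs i) (abs_nonneg _)
      _ = |u i| := one_mul _
  have hsp : Summable (fun i => p i * u i) :=
    Summable.of_abs (hsu.of_nonneg_of_le (fun i => abs_nonneg _) hle)
  have hterm : ∀ i, 0 ≤ |u i| - p i * u i := by
    intro i
    have : p i * u i ≤ |u i| := (le_abs_self _).trans (hle i)
    linarith
  have hdiff : (∑' i, |u i|) - (∑' i, p i * u i) = ∑' i, (|u i| - p i * u i) :=
    (Summable.tsum_sub hsu hsp).symm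
  have hsd : Summable (fun i => |u i| - p i * u i) := hsu.sub hsp
  -- term-wise characterization
  have hiff : ∀ i, (|u i| - p i * u i = 0) ↔
      ((α ≤ |f i| ∧ ∃ l : ℝ, 0 ≤ l ∧ u i = l * Real.sign (f i)) ∨
        (|f i| < α ∧ u i = 0)) := by
    intro i
    by_cases h : α ≤ |f i|
    · have hpi := (hp' i).1 h
      have hfi : f i ≠ 0 := by
        intro h0; rw [h0, abs_zero] at h; linarith
      have hs : Real.sign (f i) = 1 ∨ Real.sign (f i) = -1 := by
        rcases lt_trichotomy (f i) 0 with h1 | h1 | h1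
        · right; exact Real.sign_of_neg h1
        · exact absurd h1 hfi
        · left; exact Real.sign_of_pos h1
      constructor
      · intro h0
        left
        refine ⟨h, |u i|, abs_nonneg _, ?_⟩
        have hthis : p i * u i = |u i| := by linarith
        rw [hpi] at hthis
        rcases hs with hs | hs <;> rw [hs] at hthis ⊢ <;> simp at hthis ⊢ <;> linarith
      · rintro (⟨-, l, hl, hui⟩ | ⟨hlt, -⟩)
        · rw [hpi, hui]
          rcases hs with hs | hs <;>
            simp [hs, abs_of_nonneg hl]
        · linarith
    · have hpi := (hp' i).2 h
      have hlt : |f i| < α := not_le.1 h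
      constructor
      · intro h0
        right
        refine ⟨hlt, ?_⟩
        by_contra hne
        have hu0 : 0 < |u i| := abs_pos.2 hne
        have : p i * u i < |u i| := by
          calc p i * u i ≤ |p i| * |u i| := by
                rw [← abs_mul]; exact le_abs_self _
            _ < 1 * |u i| := by
                apply mul_lt_mul_of_pos_right _ hu0
                rw [hpi, abs_div, abs_of_pos hα, div_lt_one hα]
                exact hlt
            _ = |u i| := one_mul _
        linarith
      · rintro (⟨hge, -⟩ | ⟨-, hui⟩)
        · linarith
        · simp [hui]
  rw [hdiff]
  constructor
  · intro h0 i
    refine (hiff i).1 (le_antisymm ?_ (hterm i))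
    calc |u i| - p i * u i ≤ ∑' j, (|u j| - p j * u j) :=
          Summable.le_tsum hsd i (fun j _ => hterm j)
      _ = 0 := h0
  · intro hall
    have : ∀ i, |u i| - p i * u i = 0 := fun i => (hiff i).2 (hall i)
    simp [this]
end

section
/- Let p ∈ ℓ^∞ with ‖p‖_∞ ≤ 1 and let v ∈ ℓ¹ with p ∈ ∂‖·‖_{ℓ¹}(v). Then for u ∈ ℓ¹, the infimal convolution of the two Bregman distances satisfies [D_{ℓ¹}^p(·,v) □ D_{ℓ¹}^{-p}(·,-v)](u) = Σ_i (1 - |p_i|)|u_i|. -/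
/-- For `p ∈ ℓ^∞` with `‖p‖_∞ ≤ 1`, `v ∈ ℓ¹` with
`p ∈ ∂‖·‖_{ℓ¹}(v)`, and `u ∈ ℓ¹`, the infimal convolution of the two
`ℓ¹`-Bregman distances satisfies
`[D_{ℓ¹}^p(·,v) □ D_{ℓ¹}^{-p}(·,-v)](u) = Σ_i (1 - |p_i|)|u_i|`. -/
theorem icb_l1_formula
    (p : ℕ → ℝ) (hp : ∀ i, |p i| ≤ 1)
    (v : ℕ → ℝ) (hv : Memℓp v 1)
    (hpv : ∀ i, v i ≠ 0 → p i = Real.sign (v i))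
    (u : ℕ → ℝ) (hu : Memℓp u 1) :
    sInf {r : ℝ | ∃ z : ℕ → ℝ, Memℓp z 1 ∧
        r = ((∑' i, |u i - z i|) - (∑' i, p i * (u i - z i)))
          + ((∑' i, |z i|) + (∑' i, p i * z i))}
      = ∑' i, (1 - |p i|) * |u i| := by
  have habs : ∀ (w : ℕ → ℝ), Memℓp w 1 → Summable (fun i => |w i|) := by
    intro w hw
    have := hw.summable (by norm_num : 0 < (1 : ENNReal).toReal)
    simpa [Real.norm_eq_abs] using this
  have hsu := habs u hu
  -- pointwise key inequality
  have key : ∀ (i : ℕ) (b : ℝ),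
      (1 - |p i|) * |u i| ≤ (|u i - b| - p i * (u i - b)) + (|b| + p i * b) := by
    intro i b
    have h1 : p i * (u i - b) ≤ |p i| * |u i - b| := by
      calc p i * (u i - b) ≤ |p i * (u i - b)| := le_abs_self _
        _ = |p i| * |u i - b| := abs_mul _ _
    have h2 : -(|p i| * |b|) ≤ p i * b := by
      have := neg_abs_le (p i * b)
      rwa [abs_mul] at this
    have h3 : |u i| ≤ |u i - b| + |b| := by
      have := abs_add_le (u i - b) b
      simpa using this
    nlinarith [hp i, abs_nonneg (u i - b), abs_nonneg (b), abs_nonneg (u i)]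
  have hrhs : Summable (fun i => (1 - |p i|) * |u i|) := by
    refine Summable.of_nonneg_of_le (fun i => ?_) (fun i => ?_) hsu
    · nlinarith [hp i, abs_nonneg (u i)]
    · nlinarith [hp i, abs_nonneg (u i), abs_nonneg (p i)]
  have hbnd : ∀ (f g : ℕ → ℝ), Summable g → (∀ i, |f i| ≤ g i) → Summable f := by
    intro f g hg hfg
    exact (hg.of_nonneg_of_le (fun i => abs_nonneg _) hfg).of_abs
  apply le_antisymm
  · -- csInf ≤ RHS via z i = if p i * u i < 0 then u i else 0
    set z : ℕ → ℝ := fun i => if p i * u i < 0 then u i else 0 with hzdef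
    have hzb : ∀ i, |z i| ≤ |u i| := by
      intro i; simp only [hzdef]; split <;> simp [abs_nonneg]
    have hz : Memℓp z 1 := by
      apply memℓp_gen
      refine Summable.of_nonneg_of_le (fun i => ?_) (fun i => ?_)
        (by simpa [Real.norm_eq_abs] using hsu.congr (fun i => (Real.rpow_one _).symm))
      · positivity
      · simpa [Real.norm_eq_abs] using hzb i
    have hsz := habs z hz
    have hA : Summable (fun i => |u i - z i|) :=
      hbnd _ _ (hsu.add hsz) (fun i => by simpa [abs_abs] using abs_sub (u i) (z i))
    have hB : Summable (fun i => p i * (u i - z i)) := by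
      refine hbnd _ _ (hsu.add hsz) (fun i => ?_)
      calc |p i * (u i - z i)| = |p i| * |u i - z i| := abs_mul _ _
        _ ≤ 1 * |u i - z i| := by
            exact mul_le_mul_of_nonneg_right (hp i) (abs_nonneg _)
        _ = |u i - z i| := one_mul _
        _ ≤ |u i| + |z i| := abs_sub _ _
    have hD : Summable (fun i => p i * z i) := by
      refine hbnd _ _ hsz (fun i => ?_)
      calc |p i * z i| = |p i| * |z i| := abs_mul _ _
        _ ≤ 1 * |z i| := mul_le_mul_of_nonneg_right (hp i) (abs_nonneg _)
        _ = |z i| := one_mul _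
    refine csInf_le ?_ ⟨z, hz, ?_⟩
    · -- bddBelow
      refine ⟨0, fun r hr => ?_⟩
      obtain ⟨w, hw, rfl⟩ := hr
      have hsw := habs w hw
      have hA' : Summable (fun i => |u i - w i|) :=
        hbnd _ _ (hsu.add hsw) (fun i => by simpa [abs_abs] using abs_sub (u i) (w i))
      have hB' : Summable (fun i => p i * (u i - w i)) := by
        refine hbnd _ _ (hsu.add hsw) (fun i => ?_)
        calc |p i * (u i - w i)| = |p i| * |u i - w i| := abs_mul _ _
          _ ≤ 1 * |u i - w i| := mul_le_mul_of_nonneg_right (hp i) (abs_nonneg _)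
          _ = |u i - w i| := one_mul _
          _ ≤ |u i| + |w i| := abs_sub _ _
      have hD' : Summable (fun i => p i * w i) := by
        refine hbnd _ _ hsw (fun i => ?_)
        calc |p i * w i| = |p i| * |w i| := abs_mul _ _
          _ ≤ 1 * |w i| := mul_le_mul_of_nonneg_right (hp i) (abs_nonneg _)
          _ = |w i| := one_mul _
      rw [← Summable.tsum_sub hA' hB', ← Summable.tsum_add hsw hD', ← Summable.tsum_add (hA'.sub hB') (hsw.add hD')]
      refine tsum_nonneg (fun i => ?_)
      have := key i (w i)
      have h0 : 0 ≤ (1 - |p i|) * |u i| := by nlinarith [hp i, abs_nonneg (u i)]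
      linarith
    · rw [← Summable.tsum_sub hA hB, ← Summable.tsum_add hsz hD, ← Summable.tsum_add (hA.sub hB) (hsz.add hD)]
      refine tsum_congr (fun i => ?_)
      simp only [hzdef]
      by_cases h : p i * u i < 0
      · rw [if_pos h]
        have h1 : |p i * u i| = -(p i * u i) := abs_of_neg h
        have h2 : |p i * u i| = |p i| * |u i| := abs_mul _ _
        have hpu : p i * u i = -(|p i| * |u i|) := by linarith
        simp only [sub_self, abs_zero, mul_zero]
        rw [hpu]; ring
      · rw [if_neg h]
        push_neg at h
        have h1 : |p i * u i| = p i * u i := abs_of_nonneg h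
        have h2 : |p i * u i| = |p i| * |u i| := abs_mul _ _
        have hpu : p i * u i = |p i| * |u i| := by linarith
        simp only [sub_zero, abs_zero, mul_zero, add_zero]
        rw [hpu]; ring
  · -- RHS ≤ csInf
    refine le_csInf ?_ ?_
    · refine ⟨_, 0, zero_memℓp, rfl⟩
    · rintro r ⟨w, hw, rfl⟩
      have hsw := habs w hw
      have hA' : Summable (fun i => |u i - w i|) :=
        hbnd _ _ (hsu.add hsw) (fun i => by simpa [abs_abs] using abs_sub (u i) (w i))
      have hB' : Summable (fun i => p i * (u i - w i)) := by
        refine hbnd _ _ (hsu.add hsw) (fun i => ?_)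
        calc |p i * (u i - w i)| = |p i| * |u i - w i| := abs_mul _ _
          _ ≤ 1 * |u i - w i| := mul_le_mul_of_nonneg_right (hp i) (abs_nonneg _)
          _ = |u i - w i| := one_mul _
          _ ≤ |u i| + |w i| := abs_sub _ _
      have hD' : Summable (fun i => p i * w i) := by
        refine hbnd _ _ hsw (fun i => ?_)
        calc |p i * w i| = |p i| * |w i| := abs_mul _ _
          _ ≤ 1 * |w i| := mul_le_mul_of_nonneg_right (hp i) (abs_nonneg _)
          _ = |w i| := one_mul _
      rw [← Summable.tsum_sub hA' hB', ← Summable.tsum_add hsw hD', ← Summable.tsum_add (hA'.sub hB') (hsw.add hD')]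
      exact Summable.tsum_le_tsum (fun i => by have := key i (w i); linarith) hrhs
        ((hA'.sub hB').add (hsw.add hD'))
end

section
/- Let p ∈ ℝ^m with |p| ≤ 1 (Euclidean norm) and u ∈ ℝ^m, and let φ denote the angle between u and p (with φ := 0 if u = 0 or p = 0). Then the pointwise infimal convolution inf_{z ∈ ℝ^m} (|u - z| - p·(u - z)) + (|z| + p·z) equals |u|(1 - |cos φ||p|) if |p| < |cos φ|, and equals |u||sin φ|√(1 - |p|²) if |p| ≥ |cos φ|. -/
open RealInnerProductSpace

set_option maxHeartbeats 4000000

/-- For `p ∈ ℝ^m` with `|p| ≤ 1`, `u ∈ ℝ^m`, and `φ` the angle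
between `u` and `p` (with `φ = 0` when `u = 0` or `p = 0`), the pointwise
infimal convolution `inf_z (|u-z| - p·(u-z)) + (|z| + p·z)` equals
`|u|(1 - |cos φ||p|)` if `|p| < |cos φ|`, and `|u||sin φ|√(1-|p|²)` if
`|p| ≥ |cos φ|`. -/
theorem pointwise_icb_isotropic
    {m : ℕ} (p u : EuclideanSpace ℝ (Fin m)) (hp : ‖p‖ ≤ 1)
    (φ : ℝ) (hφ : ⟪u, p⟫ = ‖u‖ * ‖p‖ * Real.cos φ)
    (hφ0 : u = 0 ∨ p = 0 → φ = 0) :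
    (⨅ z : EuclideanSpace ℝ (Fin m),
        ((‖u - z‖ - ⟪p, u - z⟫) + (‖z‖ + ⟪p, z⟫)))
      = if ‖p‖ < |Real.cos φ| then ‖u‖ * (1 - |Real.cos φ| * ‖p‖)
        else ‖u‖ * |Real.sin φ| * Real.sqrt (1 - ‖p‖^2) := by
  set F : EuclideanSpace ℝ (Fin m) → ℝ :=
    fun z => (‖u - z‖ - ⟪p, u - z⟫) + (‖z‖ + ⟪p, z⟫) with hF
  have nonneg : ∀ z, 0 ≤ F z := by
    intro z
    have h1 : |⟪p, u - z⟫| ≤ ‖u - z‖ := by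
      have := abs_real_inner_le_norm p (u - z)
      nlinarith [norm_nonneg (u - z)]
    have h2 : |⟪p, z⟫| ≤ ‖z‖ := by
      have := abs_real_inner_le_norm p z
      nlinarith [norm_nonneg z]
    rcases abs_le.mp h1 with ⟨h1a, h1b⟩
    rcases abs_le.mp h2 with ⟨h2a, h2b⟩
    simp only [hF]
    linarith
  have hbdd : BddBelow (Set.range F) := by
    refine ⟨0, ?_⟩
    rintro x ⟨z, rfl⟩
    exact nonneg z
  have lb : ∀ y : EuclideanSpace ℝ (Fin m), ‖y + p‖ ≤ 1 → ‖y - p‖ ≤ 1 →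
      ∀ z, ⟪y, u⟫ ≤ F z := by
    intro y h1 h2 z
    have A : ⟪y + p, u - z⟫ ≤ ‖u - z‖ := by
      calc ⟪y + p, u - z⟫ ≤ ‖y + p‖ * ‖u - z‖ := real_inner_le_norm _ _
        _ ≤ 1 * ‖u - z‖ := mul_le_mul_of_nonneg_right h1 (norm_nonneg _)
        _ = ‖u - z‖ := one_mul _
    have B : ⟪y - p, z⟫ ≤ ‖z‖ := by
      calc ⟪y - p, z⟫ ≤ ‖y - p‖ * ‖z‖ := real_inner_le_norm _ _
        _ ≤ 1 * ‖z‖ := mul_le_mul_of_nonneg_right h2 (norm_nonneg _)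
        _ = ‖z‖ := one_mul _
    have expand : ⟪y, u⟫ = (⟪y + p, u - z⟫ - ⟪p, u - z⟫) + (⟪y - p, z⟫ + ⟪p, z⟫) := by
      simp only [inner_add_left, inner_sub_left, inner_sub_right]
      ring
    simp only [hF]
    linarith
  have inf_eq : ∀ V : ℝ, (∃ z, F z = V) → (∀ z, V ≤ F z) → (⨅ z, F z) = V := by
    intro V ⟨z₀, hz₀⟩ hV
    exact le_antisymm (hz₀ ▸ ciInf_le hbdd z₀) (le_ciInf hV)
  -- trivial case u = 0
  by_cases hu : u = 0
  · have hφ' : φ = 0 := hφ0 (Or.inl hu)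
    have hinf : (⨅ z, F z) = 0 := by
      refine inf_eq 0 ⟨0, ?_⟩ nonneg
      simp [hF, hu]
    rw [hinf, hu]
    simp [hφ']
  have hU : (0:ℝ) < ‖u‖ := norm_pos_iff.mpr hu
  -- trivial case p = 0
  by_cases hp0 : p = 0
  · have hφ' : φ = 0 := hφ0 (Or.inr hp0)
    have hcond : ‖p‖ < |Real.cos φ| := by simp [hp0, hφ']
    rw [if_pos hcond]
    refine inf_eq _ ⟨0, ?_⟩ ?_
    · simp [hF, hp0, hφ']
    · intro z
      have := lb (‖u‖⁻¹ • u) ?_ ?_ z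
      · have : ‖u‖⁻¹ * ‖u‖^2 ≤ F z := by
          rwa [real_inner_smul_left, real_inner_self_eq_norm_sq] at this
        have h2 : ‖u‖⁻¹ * ‖u‖^2 = ‖u‖ := by field_simp
        rw [h2] at this
        simpa [hp0, hφ'] using this
      · simp [hp0, norm_smul, abs_of_nonneg (le_of_lt (inv_pos.mpr hU)),
          inv_mul_cancel₀ hU.ne']
      · simp [hp0, norm_smul, abs_of_nonneg (le_of_lt (inv_pos.mpr hU)),
          inv_mul_cancel₀ hU.ne']
  have hr : (0:ℝ) < ‖p‖ := norm_pos_iff.mpr hp0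
  set U := ‖u‖ with hUdef
  set r := ‖p‖ with hrdef
  set c := Real.cos φ with hcdef
  have ha : ⟪p, u⟫ = U * r * c := by rw [real_inner_comm]; exact hφ
  have hn1 : ‖U⁻¹ • u‖ = 1 := by
    rw [norm_smul, Real.norm_eq_abs, abs_of_nonneg (inv_nonneg.mpr hU.le),
      inv_mul_cancel₀ hU.ne']
  rcases lt_or_ge r |c| with hcase | hcase
  · -- case A : r < |cos φ|
    rw [if_pos hcase]
    rcases le_or_gt 0 c with hc | hc
    · -- cos φ ≥ 0
      rw [abs_of_nonneg hc] at hcase ⊢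
      refine inf_eq _ ⟨0, ?_⟩ ?_
      · simp only [hF, sub_zero, norm_zero, inner_zero_right, ha]
        ring
      · intro z
        have key := lb (U⁻¹ • u - p) ?_ ?_ z
        · have e : ⟪U⁻¹ • u - p, u⟫ = U * (1 - c * r) := by
            rw [inner_sub_left, real_inner_smul_left, real_inner_self_eq_norm_sq, ha]
            field_simp
            ring
          rwa [e] at key
        · have e2 : (U⁻¹ • u - p) + p = U⁻¹ • u := by abel
          rw [e2, hn1]
        · have hsq : ‖(U⁻¹ • u - p) - p‖^2 = 1 - 4*r*c + 4*r^2 := by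
            rw [← real_inner_self_eq_norm_sq]
            simp only [inner_sub_left, inner_sub_right, real_inner_smul_left,
              real_inner_smul_right, real_inner_self_eq_norm_sq, hφ, ha, hn1]
            field_simp
            ring
          nlinarith [norm_nonneg ((U⁻¹ • u - p) - p), hr.le, hcase]
    · -- cos φ < 0
      rw [abs_of_neg hc] at hcase ⊢
      refine inf_eq _ ⟨u, ?_⟩ ?_
      · simp only [hF, sub_self, norm_zero, inner_zero_right, ha]
        ring
      · intro z
        have key := lb (U⁻¹ • u + p) ?_ ?_ z
        · have e : ⟪U⁻¹ • u + p, u⟫ = U * (1 - -c * r) := by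
            rw [inner_add_left, real_inner_smul_left, real_inner_self_eq_norm_sq, ha]
            field_simp
            ring
          rwa [e] at key
        · have hsq : ‖(U⁻¹ • u + p) + p‖^2 = 1 + 4*r*c + 4*r^2 := by
            rw [← real_inner_self_eq_norm_sq]
            simp only [inner_add_left, inner_add_right, real_inner_smul_left,
              real_inner_smul_right, real_inner_self_eq_norm_sq, hφ, ha, hn1]
            field_simp
            ring
          nlinarith [norm_nonneg ((U⁻¹ • u + p) + p), hr.le, hcase]
        · have e2 : (U⁻¹ • u + p) - p = U⁻¹ • u := by abel
          rw [e2, hn1]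
  · -- case B : |cos φ| ≤ r
    rw [if_neg (not_lt.mpr hcase)]
    rcases eq_or_lt_of_le hp with hr1 | hr1
    · -- r = 1 : infimum is 0, not attained in general
      have hrhs : U * |Real.sin φ| * Real.sqrt (1 - r^2) = 0 := by
        rw [hr1]
        norm_num
      rw [hrhs]
      refine le_antisymm ?_ (le_ciInf nonneg)
      have upper : ∀ ε : ℝ, 0 < ε → (⨅ z, F z) ≤ ε := by
        intro ε hε
        set a : ℝ := ⟪p, u⟫ with hadef
        obtain ⟨T, hT, hTnn⟩ : ∃ T:ℝ, 2*ε*T = U^2 ∧ 0 ≤ T :=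
          ⟨U^2/(2*ε), by field_simp, by positivity⟩
        set t : ℝ := |a| + 1 + T with htdef
        have hat : 1 + T ≤ a + t := by
          rw [htdef]
          have := neg_abs_le a
          linarith
        have htpos : (0:ℝ) ≤ t := by
          rw [htdef]
          have := abs_nonneg a
          linarith
        clear_value t
        have hvsq : ‖u + t • p‖^2 = U^2 + 2*t*a + t^2 := by
          rw [norm_add_sq_real, real_inner_smul_right, hφ, ha, norm_smul,
            Real.norm_eq_abs, abs_of_nonneg htpos]
          simp only [← hrdef, ← hUdef]
          rw [hr1]
          ring
        have hUa : a^2 ≤ U^2 := by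
          have h2 := abs_real_inner_le_norm p u
          simp only [← hrdef, ← hUdef, ← hadef] at h2
          rw [hr1, one_mul] at h2
          nlinarith [abs_nonneg a, sq_abs a]
        have hB : (0:ℝ) < (a + t) + ε := by linarith
        have hsq2 : ‖u + t • p‖^2 ≤ ((a+t)+ε)^2 := by
          nlinarith [hT, hat, hε, hUa, hTnn, hvsq]
        have hvle : ‖u + t • p‖ ≤ (a + t) + ε := by
          nlinarith [norm_nonneg (u + t • p), hsq2, hB]
        have h1 : ⟪p, u + t • p⟫ = a + t := by
          rw [inner_add_right, real_inner_smul_right, real_inner_self_eq_norm_sq]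
          simp only [← hrdef, ← hadef]
          rw [hr1]
          ring
        have h2 : ‖t • p‖ = t := by
          rw [norm_smul, Real.norm_eq_abs, abs_of_nonneg htpos]
          simp only [← hrdef]
          rw [hr1, mul_one]
        have h3 : ⟪p, t • p⟫ = t := by
          rw [real_inner_smul_right, real_inner_self_eq_norm_sq]
          simp only [← hrdef]
          rw [hr1]
          ring
        have hFz : F (-(t • p)) ≤ ε := by
          simp only [hF, sub_neg_eq_add, inner_neg_right, norm_neg]
          rw [h1, h2, h3]
          linarith [hvle]
        exact (ciInf_le hbdd _).trans hFz
      by_contra hcon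
      push_neg at hcon
      have := upper ((⨅ z, F z)/2) (by linarith)
      linarith
    · -- |c| ≤ r < 1
      have hc2 : c^2 ≤ r^2 := by nlinarith [hcase, abs_nonneg c, sq_abs c, le_abs_self c]
      have h1r2 : (0:ℝ) < 1 - r^2 := by nlinarith
      have h1c2 : (0:ℝ) < 1 - c^2 := by nlinarith
      set S := Real.sqrt (1 - r^2) with hSdef
      have hS2 : S^2 = 1 - r^2 := Real.sq_sqrt h1r2.le
      have hSpos : 0 < S := Real.sqrt_pos.mpr h1r2
      set K := Real.sqrt (1 - c^2) with hKdef
      have hK2 : K^2 = 1 - c^2 := Real.sq_sqrt h1c2.le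
      have hKpos : 0 < K := Real.sqrt_pos.mpr h1c2
      have habs : |Real.sin φ| = K := by
        rw [hKdef, ← Real.sqrt_sq_eq_abs]
        congr 1
        have := Real.sin_sq_add_cos_sq φ
        rw [← hcdef] at this
        linarith
      rw [habs]
      set β : ℝ := S/(U*K) with hβdef
      set γ : ℝ := U*c/r with hγdef
      set y : EuclideanSpace ℝ (Fin m) := β • u - (β*γ) • p with hydef
      have hpy : ⟪p, y⟫ = 0 := by
        rw [hydef, inner_sub_right, real_inner_smul_right, real_inner_smul_right, ha,
          real_inner_self_eq_norm_sq]
        simp only [← hrdef]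
        rw [hγdef]
        field_simp
        ring
      have hyu : ⟪y, u⟫ = U * K * S := by
        have step1 : ⟪y, u⟫ = β*(U^2*(1-c^2)) := by
          rw [hydef, inner_sub_left, real_inner_smul_left, real_inner_smul_left,
            real_inner_self_eq_norm_sq, ha]
          simp only [← hUdef]
          rw [hγdef]
          field_simp
        rw [step1, ← hK2, hβdef]
        field_simp
      have hyy : ⟪y, y⟫ = S^2 := by
        have step1 : ⟪y, y⟫ = β^2*(U^2*(1-c^2)) := by
          conv_lhs => rw [hydef]
          simp only [inner_sub_left, inner_sub_right, real_inner_smul_left,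
            real_inner_smul_right]
          simp only [real_inner_self_eq_norm_sq, hφ, ha]
          try simp only [← hUdef, ← hrdef]
          rw [hγdef]
          field_simp
          ring
        rw [step1, ← hK2, hβdef]
        field_simp
      have hyp2 : ‖y + p‖^2 = 1 := by
        rw [← real_inner_self_eq_norm_sq]
        simp only [inner_add_left, inner_add_right]
        rw [real_inner_comm p y, hyy, hpy, real_inner_self_eq_norm_sq]
        simp only [← hrdef]
        nlinarith [hS2]
      have hym2 : ‖y - p‖^2 = 1 := by
        rw [← real_inner_self_eq_norm_sq]
        simp only [inner_sub_left, inner_sub_right]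
        rw [real_inner_comm p y, hyy, hpy, real_inner_self_eq_norm_sq]
        simp only [← hrdef]
        nlinarith [hS2]
      have hypn : ‖y + p‖ = 1 := by
        rw [← Real.sqrt_sq (norm_nonneg (y+p)), hyp2, Real.sqrt_one]
      have hymn : ‖y - p‖ = 1 := by
        rw [← Real.sqrt_sq (norm_nonneg (y-p)), hym2, Real.sqrt_one]
      -- the key inequality |c| * S ≤ K * r
      have hcross : |c| * S ≤ K * r := by
        nlinarith [hc2, hS2, hK2, abs_nonneg c, sq_abs c, hSpos, hKpos, hr,
          mul_nonneg (abs_nonneg c) hSpos.le, mul_pos hKpos hr]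
      set τ : ℝ := (U*K/S + U*c/r)/2 with hτdef
      set t : ℝ := (U*K/S - U*c/r)/2 with htdef
      have hU0 : U ≠ 0 := hU.ne'
      have hr0 : r ≠ 0 := hr.ne'
      have hS0 : S ≠ 0 := hSpos.ne'
      have hK0 : K ≠ 0 := hKpos.ne'
      clear_value S K β γ τ t y
      have hmul1 : U * (c * S) ≤ U * (|c| * S) :=
        mul_le_mul_of_nonneg_left (mul_le_mul_of_nonneg_right (le_abs_self c) hSpos.le) hU.le
      have hmul1' : U * (-|c| * S) ≤ U * (c * S) :=
        mul_le_mul_of_nonneg_left (mul_le_mul_of_nonneg_right (neg_abs_le c) hSpos.le) hU.le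
      have hmul2 : U * (|c| * S) ≤ U * (K * r) := mul_le_mul_of_nonneg_left hcross hU.le
      have hdivle : U*c/r ≤ U*K/S := by
        rw [div_le_div_iff₀ hr hSpos]
        nlinarith [hmul1, hmul2]
      have hdivge : -(U*K/S) ≤ U*c/r := by
        rw [neg_le, ← neg_div, div_le_div_iff₀ hr hSpos]
        nlinarith [hmul1', hmul2]
      have ht0 : 0 ≤ t := by rw [htdef]; linarith
      have hτ0 : 0 ≤ τ := by rw [hτdef]; linarith
      have hsum : τ + t = U*K/S := by rw [hτdef, htdef]; ring
      have hdiff : τ - t = U*c/r := by rw [hτdef, htdef]; ring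
      have hid : u - t • (y - p) = τ • (y + p) := by
        rw [hydef]
        match_scalars
        · rw [hτdef, htdef, hβdef]
          field_simp
          ring
        · rw [hτdef, htdef, hβdef, hγdef]
          field_simp
          ring
      refine inf_eq _ ⟨t • (y - p), ?_⟩ ?_
      · -- value at the minimizer
        have e1 : ⟪p, y + p⟫ = r^2 := by
          rw [inner_add_right, hpy, real_inner_self_eq_norm_sq]
          try simp only [← hrdef]
          ring
        have e2 : ⟪p, y - p⟫ = -(r^2) := by
          rw [inner_sub_right, hpy, real_inner_self_eq_norm_sq]
          try simp only [← hrdef]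
          ring
        simp only [hF]
        rw [hid, norm_smul, norm_smul, real_inner_smul_right, real_inner_smul_right,
          e1, e2, Real.norm_eq_abs, Real.norm_eq_abs, abs_of_nonneg hτ0,
          abs_of_nonneg ht0, hypn, hymn]
        have e3 : τ * 1 - τ * r^2 + (t * 1 + t * -(r^2)) = (τ + t) * (1 - r^2) := by
          ring
        rw [e3, hsum, ← hS2]
        field_simp
      · intro z
        have key := lb y (le_of_eq hypn) (le_of_eq hymn) z
        rwa [hyu] at key
end

section
/- Let Γ : H → ℓ¹(ℝ^m) be linear and bounded from a Hilbert space H, J(u) = ‖Γu‖_{ℓ¹(ℝ^m)}, and suppose p_α = Γ* q_α with q_α ∈ ∂‖·‖_{ℓ¹(ℝ^m)}(Γ u_α) (so p_α ∈ ∂J(u_α)). Then for all u: [D_{ℓ¹(ℝ^m)}^{q_α}(·, Γu_α) □ D_{ℓ¹(ℝ^m)}^{-q_α}(·, -Γu_α)](Γu) ≤ [D_J^{p_α}(·, u_α) □ D_J^{-p_α}(·, -u_α)](u), with equality if Γ is surjective. -/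
open RealInnerProductSpace


section Aux
variable {m : ℕ}

lemma lp_one_summable (w : lp (fun _ : ℕ => EuclideanSpace ℝ (Fin m)) 1) :
    Summable fun i => ‖w i‖ := by
  have := lp.memℓp w
  rw [memℓp_gen_iff (by norm_num)] at this
  simpa using this

lemma inner_abs_le (q : ℕ → EuclideanSpace ℝ (Fin m)) (hq1 : ∀ i, ‖q i‖ ≤ 1)
    (w : lp (fun _ : ℕ => EuclideanSpace ℝ (Fin m)) 1) (i : ℕ) :
    |⟪q i, w i⟫| ≤ ‖w i‖ := by
  calc |⟪q i, w i⟫| ≤ ‖q i‖ * ‖w i‖ := abs_real_inner_le_norm _ _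
    _ ≤ 1 * ‖w i‖ := by gcongr; exact hq1 i
    _ = ‖w i‖ := one_mul _

lemma inner_summable (q : ℕ → EuclideanSpace ℝ (Fin m)) (hq1 : ∀ i, ‖q i‖ ≤ 1)
    (w : lp (fun _ : ℕ => EuclideanSpace ℝ (Fin m)) 1) :
    Summable fun i => ⟪q i, w i⟫ :=
  (lp_one_summable w).of_norm_bounded (fun i => by
    simpa using inner_abs_le q hq1 w i)

lemma inner_tsum_le (q : ℕ → EuclideanSpace ℝ (Fin m)) (hq1 : ∀ i, ‖q i‖ ≤ 1)
    (w : lp (fun _ : ℕ => EuclideanSpace ℝ (Fin m)) 1) :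
    |∑' i, ⟪q i, w i⟫| ≤ ∑' i, ‖w i‖ := by
  calc |∑' i, ⟪q i, w i⟫| ≤ ∑' i, |⟪q i, w i⟫| := by
        simpa using norm_tsum_le_tsum_norm (f := fun i => ⟪q i, w i⟫)
          ((lp_one_summable w).of_nonneg_of_le (fun i => abs_nonneg _)
            (inner_abs_le q hq1 w))
    _ ≤ ∑' i, ‖w i‖ := Summable.tsum_le_tsum (inner_abs_le q hq1 w)
        ((lp_one_summable w).of_nonneg_of_le (fun i => abs_nonneg _)
          (inner_abs_le q hq1 w)) (lp_one_summable w)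

end Aux

/-- For `Γ : H → ℓ¹(ℝ^m)` linear and bounded,
`J(u) = ‖Γu‖_{ℓ¹(ℝ^m)}` and `p_α = Γ* q_α` with
`q_α ∈ ∂‖·‖_{ℓ¹(ℝ^m)}(Γu_α)`, the infimal convolution of the `ℓ¹(ℝ^m)`-Bregman
distances evaluated at `Γu` is at most the infimal convolution of the
`J`-Bregman distances evaluated at `u`, with equality when `Γ` is surjective. -/
theorem icb_chain_rule_inequality
    {H : Type*} [NormedAddCommGroup H] [NormedSpace ℝ H] {m : ℕ}
    (Γ : H →L[ℝ] lp (fun _ : ℕ => EuclideanSpace ℝ (Fin m)) 1)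
    (uα : H) (q : ℕ → EuclideanSpace ℝ (Fin m))
    (hq1 : ∀ i, ‖q i‖ ≤ 1)
    (hq2 : ∀ i, (Γ uα : ∀ _ : ℕ, EuclideanSpace ℝ (Fin m)) i ≠ 0 →
      q i = ‖(Γ uα : ∀ _ : ℕ, EuclideanSpace ℝ (Fin m)) i‖⁻¹ •
        (Γ uα : ∀ _ : ℕ, EuclideanSpace ℝ (Fin m)) i)
    (u : H) :
    (sInf {r : ℝ | ∃ w₁ w₂ : lp (fun _ : ℕ => EuclideanSpace ℝ (Fin m)) 1,
        w₁ + w₂ = Γ u ∧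
        r = ((∑' i, ‖w₁ i‖) - (∑' i, ⟪q i, w₁ i⟫))
          + ((∑' i, ‖w₂ i‖) + (∑' i, ⟪q i, w₂ i⟫))}
      ≤ sInf {r : ℝ | ∃ φ ψ : H, φ + ψ = u ∧
        r = ((∑' i, ‖(Γ φ) i‖) - (∑' i, ⟪q i, (Γ φ) i⟫))
          + ((∑' i, ‖(Γ ψ) i‖) + (∑' i, ⟪q i, (Γ ψ) i⟫))}) ∧
    (Function.Surjective Γ →
      sInf {r : ℝ | ∃ w₁ w₂ : lp (fun _ : ℕ => EuclideanSpace ℝ (Fin m)) 1,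
        w₁ + w₂ = Γ u ∧
        r = ((∑' i, ‖w₁ i‖) - (∑' i, ⟪q i, w₁ i⟫))
          + ((∑' i, ‖w₂ i‖) + (∑' i, ⟪q i, w₂ i⟫))}
      = sInf {r : ℝ | ∃ φ ψ : H, φ + ψ = u ∧
        r = ((∑' i, ‖(Γ φ) i‖) - (∑' i, ⟪q i, (Γ φ) i⟫))
          + ((∑' i, ‖(Γ ψ) i‖) + (∑' i, ⟪q i, (Γ ψ) i⟫))}) := by
  set S₁ := {r : ℝ | ∃ w₁ w₂ : lp (fun _ : ℕ => EuclideanSpace ℝ (Fin m)) 1,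
        w₁ + w₂ = Γ u ∧
        r = ((∑' i, ‖w₁ i‖) - (∑' i, ⟪q i, w₁ i⟫))
          + ((∑' i, ‖w₂ i‖) + (∑' i, ⟪q i, w₂ i⟫))} with hS₁
  set S₂ := {r : ℝ | ∃ φ ψ : H, φ + ψ = u ∧
        r = ((∑' i, ‖(Γ φ) i‖) - (∑' i, ⟪q i, (Γ φ) i⟫))
          + ((∑' i, ‖(Γ ψ) i‖) + (∑' i, ⟪q i, (Γ ψ) i⟫))} with hS₂
  have hsub : S₂ ⊆ S₁ := by
    rintro r ⟨φ, ψ, hφψ, rfl⟩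
    exact ⟨Γ φ, Γ ψ, by rw [← map_add, hφψ], rfl⟩
  have hne : S₂.Nonempty := ⟨_, u, 0, add_zero u, rfl⟩
  have hbdd : BddBelow S₁ := by
    refine ⟨0, ?_⟩
    rintro r ⟨w₁, w₂, -, rfl⟩
    have h1 := abs_le.mp (inner_tsum_le q hq1 w₁)
    have h2 := abs_le.mp (inner_tsum_le q hq1 w₂)
    linarith [h1.1, h1.2, h2.1, h2.2]
  refine ⟨csInf_le_csInf hbdd hne hsub, fun hsurj => ?_⟩
  have heq : S₁ = S₂ := by
    refine Set.Subset.antisymm ?_ hsub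
    rintro r ⟨w₁, w₂, hw, rfl⟩
    obtain ⟨φ, hφ⟩ := hsurj w₁
    refine ⟨φ, u - φ, add_sub_cancel φ u, ?_⟩
    have hψ : Γ (u - φ) = w₂ := by
      rw [map_sub, hφ, ← hw]; abel
    rw [hφ, hψ]
  rw [heq]
end

section
/- Let A : X → Y be bounded linear between Hilbert spaces, J convex one-homogeneous, and u^λ a singular vector, i.e. λ A*A u^λ ∈ ∂J(u^λ) for some λ > 0. Then for data f = c A u^λ with c > αλ, the element u_α = (c - αλ) u^λ is a minimizer of u ↦ (1/2)‖Au - f‖² + αJ(u), and p_α = λ A*A u^λ satisfies p_α = (1/α)A*(f - Au_α) ∈ ∂J(u_α). -/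
open RealInnerProductSpace

/-- For a singular vector `u^λ` (i.e. `λA*Au^λ ∈ ∂J(u^λ)`) of a
convex one-homogeneous `J`, and data `f = cAu^λ` with `c > αλ`, the element
`u_α = (c - αλ)u^λ` minimizes `u ↦ (1/2)‖Au - f‖² + αJ(u)`, and
`p_α = λA*Au^λ` satisfies `p_α = (1/α)A*(f - Au_α)` and `p_α ∈ ∂J(u_α)`. -/
theorem singular_vector_solution
    {X Y : Type*} [NormedAddCommGroup X] [InnerProductSpace ℝ X] [CompleteSpace X]
    [NormedAddCommGroup Y] [InnerProductSpace ℝ Y] [CompleteSpace Y]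
    (A : X →L[ℝ] Y) (J : X → ℝ) (hJconv : ConvexOn ℝ Set.univ J)
    (hJhom : ∀ (t : ℝ), 0 ≤ t → ∀ u : X, J (t • u) = t * J u)
    (lam : ℝ) (hlam : 0 < lam) (ulam : X)
    (hsv : ∀ w : X, J ulam + ⟪lam • ContinuousLinearMap.adjoint A (A ulam), w - ulam⟫ ≤ J w)
    (α : ℝ) (hα : 0 < α) (c : ℝ) (hc : α * lam < c)
    (f : Y) (hf : f = c • A ulam) :
    (∀ w : X, (1/2) * ‖A ((c - α * lam) • ulam) - f‖^2 + α * J ((c - α * lam) • ulam)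
        ≤ (1/2) * ‖A w - f‖^2 + α * J w) ∧
    lam • ContinuousLinearMap.adjoint A (A ulam)
      = (1/α) • ContinuousLinearMap.adjoint A (f - A ((c - α * lam) • ulam)) ∧
    (∀ w : X, J ((c - α * lam) • ulam)
        + ⟪lam • ContinuousLinearMap.adjoint A (A ulam), w - (c - α * lam) • ulam⟫ ≤ J w) := by
  set p := lam • ContinuousLinearMap.adjoint A (A ulam) with hp
  set s := c - α * lam with hs
  have hs0 : 0 ≤ s := by simp [hs]; linarith
  -- ⟪p, ulam⟫ = J ulam
  have hJ0 : J 0 = 0 := by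
    have := hJhom 0 le_rfl 0
    simpa using this
  have h1 : ⟪p, ulam⟫ = J ulam := by
    have h2 := hsv 0
    have h3 := hsv ((2:ℝ) • ulam)
    rw [hJhom 2 (by norm_num) ulam] at h3
    simp only [inner_sub_right, inner_zero_right] at h2 h3
    rw [hJ0] at h2
    have : ⟪p, (2:ℝ) • ulam⟫ = 2 * ⟪p, ulam⟫ := by
      rw [inner_smul_right]
    rw [this] at h3
    linarith [h2, h3]
  -- key: ⟪p, w⟫ ≤ J w
  have hkey : ∀ w : X, ⟪p, w⟫ ≤ J w := by
    intro w
    have := hsv w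
    rw [inner_sub_right, h1] at this
    linarith
  -- claim 3
  have hc3 : ∀ w : X, J (s • ulam) + ⟪p, w - s • ulam⟫ ≤ J w := by
    intro w
    rw [hJhom s hs0 ulam, inner_sub_right, inner_smul_right, h1]
    have := hkey w
    linarith
  -- claim 2
  have hc2 : p = (1/α) • ContinuousLinearMap.adjoint A (f - A (s • ulam)) := by
    have hfa : f - A (s • ulam) = (α * lam) • A ulam := by
      rw [hf, map_smul, hs]
      module
    rw [hfa, map_smul, hp, smul_smul]
    congr 1
    field_simp
  refine ⟨?_, hc2, hc3⟩
  -- claim 1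
  intro w
  have hadj : ⟪A (s • ulam) - f, A w - A (s • ulam)⟫
      = -(α * ⟪p, w - s • ulam⟫) := by
    have hfa : A (s • ulam) - f = (-(α * lam)) • A ulam := by
      rw [hf, map_smul, hs]
      module
    rw [hfa, inner_smul_left, RCLike.conj_to_real]
    have : (⟪A ulam, A w - A (s • ulam)⟫ : ℝ)
        = ⟪ContinuousLinearMap.adjoint A (A ulam), w - s • ulam⟫ := by
      rw [ContinuousLinearMap.adjoint_inner_left, map_sub]
    rw [this, hp, inner_smul_left, RCLike.conj_to_real]
    ring
  have hexp : ‖A w - f‖^2 = ‖A (s • ulam) - f‖^2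
      + 2 * ⟪A (s • ulam) - f, A w - A (s • ulam)⟫ + ‖A w - A (s • ulam)‖^2 := by
    have : A w - f = (A (s • ulam) - f) + (A w - A (s • ulam)) := by abel
    rw [this, norm_add_sq_real]
  have hsq : 0 ≤ ‖A w - A (s • ulam)‖^2 := sq_nonneg _
  have h3 := hc3 w
  nlinarith [hsq, hexp, hadj, h3]
end

section
/- Let A : X → Y be bounded linear between a Hilbert space X and Hilbert space Y, α > 0, and consider Tikhonov regularization: u_α minimizing (1/2)‖Au - f‖² + (α/2)‖u‖². Assume the source condition u* = A*w* holds and f* = Au*. Then with w_α = (1/α)(f - Au_α), the identity ‖Au_α - Au*‖² + α²‖w_α - w*‖² + 2α‖u_α - u*‖² = ‖f - Au*‖² + α²‖w*‖² - 2α⟨f - Au*, w*⟩ holds. -/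
open RealInnerProductSpace

/-- For Tikhonov regularization with source condition
`u* = A*w*` and `f* = Au*`, with `w_α = (1/α)(f - Au_α)`, the identity
`‖Au_α - Au*‖² + α²‖w_α - w*‖² + 2α‖u_α - u*‖²
  = ‖f - Au*‖² + α²‖w*‖² - 2α⟨f - Au*, w*⟩` holds. -/
theorem tikhonov_bias_variance_identity
    {X Y : Type*} [NormedAddCommGroup X] [InnerProductSpace ℝ X] [CompleteSpace X]
    [NormedAddCommGroup Y] [InnerProductSpace ℝ Y] [CompleteSpace Y]
    (A : X →L[ℝ] Y) (α : ℝ) (hα : 0 < α) (f : Y)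
    (wstar : Y) (ustar : X) (hsource : ustar = ContinuousLinearMap.adjoint A wstar)
    (fstar : Y) (hfstar : fstar = A ustar)
    (uα : X)
    (huα : ∀ w : X, (1/2) * ‖A uα - f‖^2 + (α/2) * ‖uα‖^2
      ≤ (1/2) * ‖A w - f‖^2 + (α/2) * ‖w‖^2)
    (wα : Y) (hwα : wα = (1/α) • (f - A uα)) :
    ‖A uα - A ustar‖^2 + α^2 * ‖wα - wstar‖^2 + 2 * α * ‖uα - ustar‖^2
      = ‖f - A ustar‖^2 + α^2 * ‖wstar‖^2 - 2 * α * ⟪f - A ustar, wstar⟫ := by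
  -- Step 1: first-order optimality condition
  have key : ∀ v : X, ⟪A uα - f, A v⟫ + α * ⟪uα, v⟫ = 0 := by
    intro v
    set L : ℝ := ⟪A uα - f, A v⟫ + α * ⟪uα, v⟫ with hL
    set Q : ℝ := (1/2) * ‖A v‖^2 + (α/2) * ‖v‖^2 with hQ
    have hQ0 : 0 ≤ Q := by
      have := sq_nonneg ‖A v‖
      have := sq_nonneg ‖v‖
      have := hα.le
      positivity
    have hquad : ∀ t : ℝ, 0 ≤ t * L + t^2 * Q := by
      intro t
      have h := huα (uα + t • v)
      have e1 : A (uα + t • v) - f = (A uα - f) + t • A v := by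
        rw [map_add, map_smul]; abel
      rw [e1] at h
      rw [norm_add_sq_real, norm_add_sq_real] at h
      rw [real_inner_smul_right, real_inner_smul_right, norm_smul, norm_smul] at h
      simp only [Real.norm_eq_abs, mul_pow, sq_abs] at h
      simp only [hL, hQ]
      nlinarith [h]
    by_contra hL0
    have hL2 : 0 < L^2 := by positivity
    have hε : (0:ℝ) < 1/(Q+1) := by positivity
    have h := hquad (-(1/(Q+1)) * L)
    have hεQ : (1/(Q+1)) * Q < 1 := by
      have he : (1/(Q+1)) * Q = Q/(Q+1) := by ring
      rw [he, div_lt_one (by linarith)]; linarith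
    nlinarith [mul_pos (mul_pos hε hL2) (by linarith : (0:ℝ) < 1 - (1/(Q+1))*Q)]
  -- Step 2: uα = A* wα
  have hadj : uα = ContinuousLinearMap.adjoint A wα := by
    have hz : ∀ v : X, ⟪uα - ContinuousLinearMap.adjoint A wα, v⟫ = 0 := by
      intro v
      have h := key v
      rw [inner_sub_left, ContinuousLinearMap.adjoint_inner_left, hwα,
        real_inner_smul_left, inner_sub_left]
      have hα' : α ≠ 0 := ne_of_gt hα
      rw [inner_sub_left] at h
      field_simp
      linarith [h]
    have h := hz (uα - ContinuousLinearMap.adjoint A wα)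
    rw [real_inner_self_eq_norm_sq, pow_eq_zero_iff (by norm_num), norm_eq_zero,
      sub_eq_zero] at h
    exact h
  -- Step 3: the algebraic identity
  set a : Y := A uα - A ustar with ha
  set b : Y := α • (wα - wstar) with hb
  have habc : a + b = (f - A ustar) - α • wstar := by
    rw [ha, hb, hwα, smul_sub, smul_smul]
    rw [mul_one_div_cancel (ne_of_gt hα), one_smul]
    abel
  have hab : ⟪a, b⟫ = α * ‖uα - ustar‖^2 := by
    rw [ha, hb, real_inner_smul_right]
    have : ⟪A uα - A ustar, wα - wstar⟫ = ⟪uα - ustar, uα - ustar⟫ := by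
      rw [← map_sub, ← ContinuousLinearMap.adjoint_inner_right, map_sub,
        ← hadj, ← hsource]
    rw [this, real_inner_self_eq_norm_sq]
  have hnorm : ‖a + b‖^2 = ‖a‖^2 + 2 * ⟪a, b⟫ + ‖b‖^2 := norm_add_sq_real a b
  rw [habc] at hnorm
  rw [norm_sub_sq_real, real_inner_smul_right, norm_smul] at hnorm
  simp only [Real.norm_eq_abs, mul_pow, sq_abs, abs_of_pos hα] at hnorm
  have hbn : ‖b‖^2 = α^2 * ‖wα - wstar‖^2 := by
    rw [hb, norm_smul, mul_pow, Real.norm_eq_abs, sq_abs]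
  rw [hab, hbn] at hnorm
  rw [ha] at hnorm
  linarith [hnorm]
end

section
/- Let A : ℓ^r → ℓ² (r > 1) be bounded linear, α > 0, and let u_α(f), u_α(f̃) be minimizers of u ↦ (1/2)‖Au - f‖²_{ℓ²} + α‖u‖_{ℓ¹} for data f and f̃ respectively. Then ‖A u_α(f) - A u_α(f̃)‖_{ℓ²} ≤ ‖f - f̃‖_{ℓ²}. -/
open scoped ENNReal
open RealInnerProductSpace

private lemma aux_nonneg_of_forall {C D : ℝ} (hD : 0 ≤ D)
    (h : ∀ t : ℝ, 0 < t → t < 1 → 0 ≤ C + t * D) : 0 ≤ C := by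
  by_contra hC
  push_neg at hC
  have hden : (0:ℝ) < 2 * D + 1 := by linarith
  set t : ℝ := min (1/2) (-C / (2 * D + 1)) with ht
  have h1 : 0 < -C / (2 * D + 1) := div_pos (by linarith) hden
  have ht0 : 0 < t := lt_min (by norm_num) h1
  have ht1 : t < 1 := lt_of_le_of_lt (min_le_left _ _) (by norm_num)
  have h2 : t ≤ -C / (2 * D + 1) := min_le_right _ _
  have h3 : t * (2 * D + 1) ≤ -C := by
    rw [← le_div_iff₀ hden]; exact h2
  have := h t ht0 ht1
  nlinarith [mul_nonneg ht0.le hD]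

private lemma aux_key
    (r : ℝ≥0∞) [Fact (1 ≤ r)]
    (A : lp (fun _ : ℕ => ℝ) r →L[ℝ] lp (fun _ : ℕ => ℝ) 2)
    (α : ℝ) (hα : 0 < α) (f : lp (fun _ : ℕ => ℝ) 2)
    (u v : lp (fun _ : ℕ => ℝ) r)
    (hu1 : Memℓp (u : ℕ → ℝ) 1) (hv1 : Memℓp (v : ℕ → ℝ) 1)
    (hu : ∀ w : lp (fun _ : ℕ => ℝ) r, Memℓp (w : ℕ → ℝ) 1 →
      (1/2) * ‖A u - f‖^2 + α * (∑' i, |u i|)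
        ≤ (1/2) * ‖A w - f‖^2 + α * (∑' i, |w i|)) :
    0 ≤ ⟪A u - f, A v - A u⟫ + α * ((∑' i, |v i|) - ∑' i, |u i|) := by
  have hsum : ∀ (g : lp (fun _ : ℕ => ℝ) r), Memℓp (g : ℕ → ℝ) 1 →
      Summable fun i => |g i| := by
    intro g hg
    have := (memℓp_gen_iff (p := 1) (by norm_num)).mp hg
    simpa [Real.norm_eq_abs] using this
  have hSu := hsum u hu1
  have hSv := hsum v hv1
  apply aux_nonneg_of_forall (D := ‖A v - A u‖^2 / 2) (by positivity)
  intro t ht0 ht1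
  set w : lp (fun _ : ℕ => ℝ) r := u + t • (v - u) with hw
  have hw1 : Memℓp (w : ℕ → ℝ) 1 := by
    have : (w : ℕ → ℝ) = (u : ℕ → ℝ) + t • ((v : ℕ → ℝ) - (u : ℕ → ℝ)) := by
      simp [hw, lp.coeFn_add, lp.coeFn_smul, lp.coeFn_sub]; rfl
    rw [this]
    exact hu1.add ((hv1.sub hu1).const_smul t)
  have hwc : ∀ i, (w : ℕ → ℝ) i = (1 - t) * u i + t * v i := by
    intro i
    have : (w : ℕ → ℝ) = (u : ℕ → ℝ) + t • ((v : ℕ → ℝ) - (u : ℕ → ℝ)) := by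
      simp [hw, lp.coeFn_add, lp.coeFn_smul, lp.coeFn_sub]; rfl
    rw [this]; simp [Pi.add_apply, Pi.smul_apply]; ring
  -- ℓ¹ bound for w
  have hSw : Summable fun i => |(w : ℕ → ℝ) i| := hsum w hw1
  have hl1 : (∑' i, |(w : ℕ → ℝ) i|)
      ≤ (1 - t) * (∑' i, |u i|) + t * (∑' i, |v i|) := by
    have hbound : ∀ i, |(w : ℕ → ℝ) i| ≤ (1 - t) * |u i| + t * |v i| := by
      intro i
      rw [hwc i]
      calc |(1 - t) * u i + t * v i| ≤ |(1 - t) * u i| + |t * v i| := abs_add_le _ _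
        _ = (1 - t) * |u i| + t * |v i| := by
            rw [abs_mul, abs_mul, abs_of_nonneg (by linarith : (0:ℝ) ≤ 1 - t),
              abs_of_nonneg ht0.le]
    calc (∑' i, |(w : ℕ → ℝ) i|)
        ≤ ∑' i, ((1 - t) * |u i| + t * |v i|) :=
          Summable.tsum_le_tsum hbound hSw ((hSu.mul_left _).add (hSv.mul_left _))
      _ = (1 - t) * (∑' i, |u i|) + t * (∑' i, |v i|) := by
          rw [Summable.tsum_add (hSu.mul_left _) (hSv.mul_left _), tsum_mul_left, tsum_mul_left]
  -- quadratic expansion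
  have hAw : A w - f = (A u - f) + t • (A v - A u) := by
    rw [hw]
    simp only [map_add, map_smul, map_sub]
    module
  have hnorm : ‖A w - f‖^2
      = ‖A u - f‖^2 + 2 * t * ⟪A u - f, A v - A u⟫ + t^2 * ‖A v - A u‖^2 := by
    rw [hAw, norm_add_sq_real, real_inner_smul_right, norm_smul]
    simp only [Real.norm_eq_abs, mul_pow, sq_abs]
    ring
  have hmin := hu w hw1
  have key : 0 ≤ t * ((⟪A u - f, A v - A u⟫ + α * ((∑' i, |v i|) - ∑' i, |u i|))
      + t * (‖A v - A u‖^2 / 2)) := by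
    have h5 : (1/2) * ‖A u - f‖^2 + α * (∑' i, |u i|)
        ≤ (1/2) * ‖A w - f‖^2
          + α * ((1 - t) * (∑' i, |u i|) + t * (∑' i, |v i|)) := by
      refine le_trans hmin ?_
      have := mul_le_mul_of_nonneg_left hl1 hα.le
      linarith
    rw [hnorm] at h5
    nlinarith
  nlinarith [key, ht0]

/-- For `A : ℓ^r → ℓ²` (`r > 1`) bounded linear, `α > 0`, and
minimizers `u`, `v` of the `ℓ¹`-regularized least-squares problem for data
`f` and `f'` respectively, the stability estimate
`‖Au - Av‖_{ℓ²} ≤ ‖f - f'‖_{ℓ²}` holds. -/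
theorem l1_regularization_stability
    (r : ℝ≥0∞) [Fact (1 ≤ r)] (hr : 1 < r)
    (A : lp (fun _ : ℕ => ℝ) r →L[ℝ] lp (fun _ : ℕ => ℝ) 2)
    (α : ℝ) (hα : 0 < α) (f f' : lp (fun _ : ℕ => ℝ) 2)
    (u v : lp (fun _ : ℕ => ℝ) r)
    (hu1 : Memℓp (u : ℕ → ℝ) 1) (hv1 : Memℓp (v : ℕ → ℝ) 1)
    (hu : ∀ w : lp (fun _ : ℕ => ℝ) r, Memℓp (w : ℕ → ℝ) 1 →
      (1/2) * ‖A u - f‖^2 + α * (∑' i, |u i|)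
        ≤ (1/2) * ‖A w - f‖^2 + α * (∑' i, |w i|))
    (hv : ∀ w : lp (fun _ : ℕ => ℝ) r, Memℓp (w : ℕ → ℝ) 1 →
      (1/2) * ‖A v - f'‖^2 + α * (∑' i, |v i|)
        ≤ (1/2) * ‖A w - f'‖^2 + α * (∑' i, |w i|)) :
    ‖A u - A v‖ ≤ ‖f - f'‖ := by
  have h1 := aux_key r A α hα f u v hu1 hv1 hu
  have h2 := aux_key r A α hα f' v u hv1 hu1 hv
  have hsum : 0 ≤ ⟪A u - f, A v - A u⟫ + ⟪A v - f', A u - A v⟫ := by linarith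
  have hin : ‖A u - A v‖^2 ≤ ⟪f - f', A u - A v⟫ := by
    have e1 : ⟪A u - f, A v - A u⟫ = -⟪A u - f, A u - A v⟫ := by
      rw [← inner_neg_right]; congr 1; abel
    have e2 : ⟪A v - f' - (A u - f), A u - A v⟫
        = ⟪A v - f', A u - A v⟫ - ⟪A u - f, A u - A v⟫ := by
      rw [inner_sub_left]
    have e3 : A v - f' - (A u - f) = (f - f') - (A u - A v) := by abel
    have h4 : 0 ≤ ⟪(f - f') - (A u - A v), A u - A v⟫ := by
      rw [← e3, e2]; linarith [e1, hsum]
    rw [inner_sub_left, real_inner_self_eq_norm_sq] at h4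
    linarith
  have hcs : ⟪f - f', A u - A v⟫ ≤ ‖f - f'‖ * ‖A u - A v‖ := real_inner_le_norm _ _
  rcases eq_or_lt_of_le (norm_nonneg (A u - A v)) with h0 | h0
  · rw [← h0]; exact norm_nonneg _
  · have : ‖A u - A v‖ * ‖A u - A v‖ ≤ ‖f - f'‖ * ‖A u - A v‖ := by
      nlinarith
    exact le_of_mul_le_mul_right this h0
end

section
/- Let J be convex, absolutely one-homogeneous, proper on a Banach space X, and suppose u ↦ (1/2)‖Au‖² + J(u) is coercive, where A = B* for bounded linear B : Y → Z with X = Z*. Let p ∈ ∂J(0) be such that there exist w ∈ Y and 0 < τ < 1 with J*((p - Bw)/τ) = 0. Then every u in the set {u : J(u) = ⟨p,u⟩, ‖Au - f‖ ≤ ‖f‖} satisfies J(u) ≤ ‖w‖·‖Au‖/(1 - τ). -/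
open RealInnerProductSpace

/-- Coercivity estimate for the debiasing step. Let `J` be
convex, absolutely one-homogeneous and proper, `A = B*` with
`B y = ⟪y, A·⟫`, `p ∈ ∂J(0)` such that `J*((p - Bw)/τ) = 0` for some `w` and
`0 < τ < 1`. Then every `u` with `J(u) = ⟨p,u⟩` and `‖Au - f‖ ≤ ‖f‖`
satisfies `J(u) ≤ ‖w‖·‖Au‖/(1 - τ)`. -/
theorem debiasing_coercivity_estimate
    {X Y : Type*} [NormedAddCommGroup X] [NormedSpace ℝ X]
    [NormedAddCommGroup Y] [InnerProductSpace ℝ Y]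
    (A : X →L[ℝ] Y) (B : Y → (X →L[ℝ] ℝ))
    (hB : ∀ (y : Y) (x : X), B y x = ⟪y, A x⟫)
    (J : X → ℝ) (hJconv : ConvexOn ℝ Set.univ J)
    (hJhom : ∀ (c : ℝ) (u : X), J (c • u) = |c| * J u)
    (p : X →L[ℝ] ℝ) (hp0 : ∀ u : X, p u ≤ J u)
    (w : Y) (τ : ℝ) (hτ : 0 < τ) (hτ1 : τ < 1)
    (hconj : ∀ u : X, (p u - B w u) / τ ≤ J u)
    (f : Y) (u : X) (hu1 : J u = p u) (hu2 : ‖A u - f‖ ≤ ‖f‖) :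
    J u ≤ ‖w‖ * ‖A u‖ / (1 - τ) := by
  have h1 : p u - B w u ≤ τ * J u := by
    have := hconj u
    calc p u - B w u = ((p u - B w u) / τ) * τ := by field_simp
    _ ≤ J u * τ := by nlinarith
    _ = τ * J u := mul_comm _ _
  have h2 : B w u ≤ ‖w‖ * ‖A u‖ := by
    rw [hB]; exact real_inner_le_norm _ _
  rw [le_div_iff₀ (by linarith : (0:ℝ) < 1 - τ)]
  nlinarith
end
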